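/- Let X be a countable metric space, R > 0, and n ∈ ℕ, and suppose every closed ball of radius R in X contains at most n points. Then X can be written as a disjoint union X = X_1 ∪ ⋯ ∪ X_n such that any two distinct points in the same X_i are at distance greater than R. In particular, a uniformly discrete metric space with bounded geometry is, for every R > 0, a finite disjoint union of R-separated subsets (subsets in which distinct points are at distance at least R). -/
import Mathlib


open Metric

def UniformlyDiscrete (X : Type*) [MetricSpace X] : Prop :=
  ∃ δ > (0:ℝ), ∀ x y : X, x ≠ y → δ ≤ dist x y

def BoundedGeometry (X : Type*) [MetricSpace X] : Prop :=
  ∀ R > (0:ℝ), ∃ N : ℕ, ∀ x : X,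
    (closedBall x R).Finite ∧ (closedBall x R).ncard ≤ N

lemma exists_coloring (X : Type*) [MetricSpace X] [Countable X]
    (R : ℝ) (hR : 0 ≤ R) (n : ℕ)
    (hball : ∀ x : X, (closedBall x R).Finite ∧ (closedBall x R).ncard ≤ n) :
    ∃ c : X → Fin n, ∀ x y : X, x ≠ y → c x = c y → R < dist x y := by
  classical
  rcases isEmpty_or_nonempty X with h | h
  · exact ⟨fun x => isEmptyElim x, fun x => isEmptyElim x⟩
  obtain ⟨e, he⟩ := exists_injective_nat X
  -- each ball (as finset)
  set F : X → Finset X := fun x => (hball x).1.toFinset with hF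
  have hmemF : ∀ x y : X, y ∈ F x ↔ dist y x ≤ R := by
    intro x y
    simp [hF, Set.Finite.mem_toFinset, Metric.mem_closedBall]
  have hFcard : ∀ x, (F x).card ≤ n := by
    intro x
    have := (hball x).2
    rwa [Set.ncard_eq_toFinset_card _ (hball x).1] at this
  have hxF : ∀ x : X, x ∈ F x := by
    intro x; rw [hmemF]; simpa using hR
  have hn : 0 < n := by
    obtain ⟨x0⟩ := h
    exact lt_of_lt_of_le (Finset.card_pos.mpr ⟨x0, hxF x0⟩) (hFcard x0)
  -- earlier neighbors
  set E : X → Finset X := fun x => (F x).filter (fun y => e y < e x) with hE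
  have hEcard : ∀ x, (E x).card < n := by
    intro x
    have hsub : E x ⊆ (F x).erase x := by
      intro y hy
      rw [hE, Finset.mem_filter] at hy
      refine Finset.mem_erase.mpr ⟨?_, hy.1⟩
      intro hxy; subst hxy; exact lt_irrefl _ hy.2
    calc (E x).card ≤ ((F x).erase x).card := Finset.card_le_card hsub
      _ < (F x).card := Finset.card_erase_lt_of_mem (hxF x)
      _ ≤ n := hFcard x
  have hEmem : ∀ x y : X, y ∈ E x → e y < e x := by
    intro x y hy
    rw [hE, Finset.mem_filter] at hy
    exact hy.2
  -- fresh color exists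
  have hfresh : ∀ (x : X) (f : ∀ y : X, e y < e x → Fin n),
      ∃ col : Fin n, col ∉ (E x).attach.image
        (fun p => f p.1 (hEmem x p.1 p.2)) := by
    intro x f
    have hcard : ((E x).attach.image
        (fun p => f p.1 (hEmem x p.1 p.2))).card < Fintype.card (Fin n) := by
      calc _ ≤ (E x).attach.card := Finset.card_image_le
        _ = (E x).card := Finset.card_attach
        _ < n := hEcard x
        _ = Fintype.card (Fin n) := (Fintype.card_fin n).symm
    have hne := (Finset.card_lt_iff_ne_univ _).mp hcard
    by_contra hcon
    push_neg at hcon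
    exact hne (Finset.eq_univ_iff_forall.mpr hcon)
  have wf : WellFounded (fun a b : X => e a < e b) :=
    InvImage.wf e Nat.lt_wfRel.wf
  set G : ∀ x : X, (∀ y : X, e y < e x → Fin n) → Fin n :=
    fun x f => (hfresh x f).choose with hG
  set c : X → Fin n := wf.fix G with hc
  have hfix : ∀ x : X, c x = G x (fun y _ => c y) := fun x => wf.fix_eq G x
  have key : ∀ x y : X, e y < e x → dist y x ≤ R → c x ≠ c y := by
    intro x y hlt hd hcc
    have hyE : y ∈ E x := by
      rw [hE, Finset.mem_filter]
      exact ⟨(hmemF x y).mpr hd, hlt⟩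
    have hnot := (hfresh x (fun y _ => c y)).choose_spec
    have hcx : c x = (hfresh x (fun y _ => c y)).choose := hfix x
    rw [← hcx] at hnot
    exact hnot (Finset.mem_image.mpr ⟨⟨y, hyE⟩, Finset.mem_attach _ _, hcc.symm⟩)
  refine ⟨c, fun x y hxy hcc => ?_⟩
  by_contra hle
  push_neg at hle
  rcases lt_or_gt_of_ne (fun h' : e x = e y => hxy (he h')) with h1 | h1
  · exact key y x h1 hle hcc.symm
  · exact key x y h1 (by rwa [dist_comm] at hle) hcc

theorem stmt8 (X : Type) [MetricSpace X] [Countable X]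
    (R : ℝ) (hR : 0 < R) (n : ℕ)
    (hball : ∀ x : X, (closedBall x R).Finite ∧ (closedBall x R).ncard ≤ n) :
    (∃ c : X → Fin n, ∀ x y : X, x ≠ y → c x = c y → R < dist x y) ∧
    (∀ (Z : Type) [MetricSpace Z], UniformlyDiscrete Z → BoundedGeometry Z →
      ∀ R' > (0:ℝ), ∃ (m : ℕ) (c : Z → Fin m),
        ∀ x y : Z, x ≠ y → c x = c y → R' ≤ dist x y) := by
  constructor
  · exact exists_coloring X R hR.le n hball
  · intro Z _ _ hbg R' hR'
    have hcount : Countable Z := by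
      rcases isEmpty_or_nonempty Z with h | h
      · infer_instance
      obtain ⟨z0⟩ := h
      have hfin : ∀ k : ℕ, (closedBall z0 ((k : ℝ) + 1) : Set Z).Finite := by
        intro k
        obtain ⟨N, hN⟩ := hbg ((k : ℝ) + 1) (by positivity)
        exact (hN z0).1
      have huniv : (Set.univ : Set Z) = ⋃ k : ℕ, closedBall z0 ((k : ℝ) + 1) := by
        apply Set.eq_of_subset_of_subset
        · intro z _
          refine Set.mem_iUnion.mpr ⟨⌈dist z z0⌉₊, ?_⟩
          have := Nat.le_ceil (dist z z0)
          simp only [Metric.mem_closedBall]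
          linarith
        · intro z _; trivial
      have : (Set.univ : Set Z).Countable := by
        rw [huniv]
        exact Set.countable_iUnion (fun k => (hfin k).countable)
      exact Set.countable_univ_iff.mp this
    obtain ⟨N, hN⟩ := hbg R' hR'
    obtain ⟨c, hc⟩ := exists_coloring Z R' hR'.le N hN
    exact ⟨N, c, fun x y hxy hcc => (hc x y hxy hcc).le⟩
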